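/- (Fact 1) Let λ ≥ 0, let θ ∈ ℝ^d and let Σ be positive definite, and suppose θ − θ* ∈ λU_Σ. If x₁ is an optimal solution of the robust optimization problem with scale λ, center θ and shape Σ, and x₂ is an optimal solution of the robust optimization problem with scale 2λ, center θ* and shape Σ, then f*(x₁) ≤ f*(x₂). -/

import Mathlib

open MeasureTheory ProbabilityTheory Matrix
open scoped ENNReal Pointwise

/-- The ellipsoid `U_Σ = {u : uᵀ Σ⁻¹ u ≤ 1}`. -/
def USet {d : ℕ} (Sg : Matrix (Fin d) (Fin d) ℝ) : Set (Fin d → ℝ) :=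
  {u | u ⬝ᵥ (Sg⁻¹ *ᵥ u) ≤ 1}

/-- `r_k(x; Σ) = max_{u ∈ U_Σ} g_k(x, u)` where `g_k(x, θ) = θᵀ v_k(x)`. -/
noncomputable def rk {d m K : ℕ} (v : Fin K → (Fin m → ℝ) → (Fin d → ℝ))
    (k : Fin K) (x : Fin m → ℝ) (Sg : Matrix (Fin d) (Fin d) ℝ) : ℝ :=
  sSup ((fun u => u ⬝ᵥ v k x) '' USet Sg)

/-- `S(λ, Y; Σ)`, the set of parameter errors that are uniformly small over `Y`. -/
noncomputable def SErr {d m K : ℕ} (v : Fin K → (Fin m → ℝ) → (Fin d → ℝ))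
    (lam : ℝ) (Y : Set (Fin m → ℝ)) (Sg : Matrix (Fin d) (Fin d) ℝ) : Set (Fin d → ℝ) :=
  {Δ | ∀ k, ∀ y ∈ Y, |Δ ⬝ᵥ v k y| ≤ lam * rk v k y Sg}

/-- Feasibility for the robust optimization problem with scale `lam`, center `θ`, shape `Σ`. -/
def Feasible {d m K : ℕ} (X : Set (Fin m → ℝ)) (v : Fin K → (Fin m → ℝ) → (Fin d → ℝ))
    (lam : ℝ) (θ : Fin d → ℝ) (Sg : Matrix (Fin d) (Fin d) ℝ) (x : Fin m → ℝ) : Prop :=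
  x ∈ X ∧ ∀ k, ∀ u ∈ USet Sg, 0 ≤ (θ + lam • u) ⬝ᵥ v k x

/-- Optimal solution of the robust optimization problem. -/
def IsOptimal {d m K : ℕ} (X : Set (Fin m → ℝ)) (f : (Fin m → ℝ) → ℝ)
    (v : Fin K → (Fin m → ℝ) → (Fin d → ℝ))
    (lam : ℝ) (θ : Fin d → ℝ) (Sg : Matrix (Fin d) (Fin d) ℝ) (x : Fin m → ℝ) : Prop :=
  Feasible X v lam θ Sg x ∧ ∀ y, Feasible X v lam θ Sg y → f x ≤ f y

open Classical in
/-- The true objective `f*`, which is `∞` when a true constraint is violated. -/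
noncomputable def fStar {d m K : ℕ} (f : (Fin m → ℝ) → ℝ)
    (v : Fin K → (Fin m → ℝ) → (Fin d → ℝ)) (θs : Fin d → ℝ) (x : Fin m → ℝ) : EReal :=
  if ∀ k, 0 ≤ θs ⬝ᵥ v k x then (f x : EReal) else ⊤

/-- The standard Gaussian measure on `ℝ^d`. -/
noncomputable def stdGaussian (d : ℕ) : Measure (Fin d → ℝ) :=
  Measure.pi fun _ => gaussianReal 0 1

open Classical in
/-- The positive semidefinite square root (junk value `0` off the psd cone). -/
noncomputable def matSqrt {d : ℕ} (A : Matrix (Fin d) (Fin d) ℝ) : Matrix (Fin d) (Fin d) ℝ :=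
  if h : A.PosSemidef then
    (h.1.eigenvectorUnitary : Matrix (Fin d) (Fin d) ℝ) *
      diagonal ((↑) ∘ Real.sqrt ∘ h.1.eigenvalues) *
      (star h.1.eigenvectorUnitary : Matrix (Fin d) (Fin d) ℝ) else 0

/-- The centered Gaussian measure on `ℝ^d` with covariance `A`. -/
noncomputable def gaussOf {d : ℕ} (A : Matrix (Fin d) (Fin d) ℝ) : Measure (Fin d → ℝ) :=
  (stdGaussian d).map (fun z => matSqrt A *ᵥ z)

/-- The Euclidean norm on `Fin d → ℝ`. -/
noncomputable def euclNorm {d : ℕ} (z : Fin d → ℝ) : ℝ := Real.sqrt (∑ i, z i ^ 2)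

/-- Quantile function of the chi distribution with `d` degrees of freedom. -/
noncomputable def chiQuantile (d : ℕ) (p : ℝ) : ℝ :=
  sInf {t : ℝ | 0 ≤ t ∧ p ≤ (stdGaussian d {z | euclNorm z ≤ t}).toReal}

/-- The minimum spatial uniform bound `μ(p, Y; P, Σ)` (`⊤` when infeasible, `0` for `p ≤ 0`). -/
noncomputable def muB {d m K : ℕ} (v : Fin K → (Fin m → ℝ) → (Fin d → ℝ)) (p : ℝ)
    (Y : Set (Fin m → ℝ)) (P : Measure (Fin d → ℝ)) (Sg : Matrix (Fin d) (Fin d) ℝ) : ℝ≥0∞ :=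
  ⨅ (μ : ℝ) (_ : 0 ≤ μ ∧ ENNReal.ofReal p ≤ P (SErr v μ Y Sg)), ENNReal.ofReal μ

lemma quad_nonneg {d : ℕ} {Sg : Matrix (Fin d) (Fin d) ℝ} (hSg : Sg.PosDef)
    (a : Fin d → ℝ) : 0 ≤ a ⬝ᵥ (Sg⁻¹ *ᵥ a) := by
  have := (hSg.inv.posSemidef).re_dotProduct_nonneg a
  simpa using this

lemma zero_mem_USet {d : ℕ} (Sg : Matrix (Fin d) (Fin d) ℝ) : (0 : Fin d → ℝ) ∈ USet Sg := by
  simp [USet]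

lemma neg_mem_USet {d : ℕ} {Sg : Matrix (Fin d) (Fin d) ℝ} {a : Fin d → ℝ}
    (ha : a ∈ USet Sg) : -a ∈ USet Sg := by
  simpa [USet, Matrix.mulVec_neg] using ha

lemma half_add_mem_USet {d : ℕ} {Sg : Matrix (Fin d) (Fin d) ℝ} (hSg : Sg.PosDef)
    {a b : Fin d → ℝ} (ha : a ∈ USet Sg) (hb : b ∈ USet Sg) :
    (2⁻¹ : ℝ) • (a + b) ∈ USet Sg := by
  have hQab : 0 ≤ (a - b) ⬝ᵥ (Sg⁻¹ *ᵥ (a - b)) := quad_nonneg hSg _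
  simp only [USet, Set.mem_setOf_eq] at *
  have h1 : ((2⁻¹:ℝ) • (a+b)) ⬝ᵥ (Sg⁻¹ *ᵥ ((2⁻¹:ℝ) • (a+b)))
      = (4:ℝ)⁻¹ * ((a+b) ⬝ᵥ (Sg⁻¹ *ᵥ (a+b))) := by
    simp [Matrix.mulVec_smul, Matrix.mulVec_add, smul_dotProduct, dotProduct_smul,
      dotProduct_add, add_dotProduct, smul_eq_mul]
    ring
  have hexp : (a+b) ⬝ᵥ (Sg⁻¹ *ᵥ (a+b)) + (a-b) ⬝ᵥ (Sg⁻¹ *ᵥ (a-b))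
      = 2 * (a ⬝ᵥ (Sg⁻¹ *ᵥ a)) + 2 * (b ⬝ᵥ (Sg⁻¹ *ᵥ b)) := by
    simp [Matrix.mulVec_add, Matrix.mulVec_sub, add_dotProduct, sub_dotProduct,
      dotProduct_add, dotProduct_sub]
    ring
  rw [h1]
  nlinarith

/-- Fact 1: if `θ − θ* ∈ λU_Σ`, `x₁` is optimal for the robust problem with
scale `λ`, center `θ`, shape `Σ`, and `x₂` is optimal with scale `2λ`, center `θ*`, shape `Σ`,
then `f*(x₁) ≤ f*(x₂)`. -/
theorem stmt1 {d m K : ℕ} (hd : 1 ≤ d) (hm : 1 ≤ m) (hK : 1 ≤ K)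
    (θstar : Fin d → ℝ) (v : Fin K → (Fin m → ℝ) → (Fin d → ℝ))
    (X : Set (Fin m → ℝ)) (f : (Fin m → ℝ) → ℝ)
    (lam : ℝ) (hlam : 0 ≤ lam) (θ : Fin d → ℝ)
    (Sg : Matrix (Fin d) (Fin d) ℝ) (hSg : Sg.PosDef)
    (hθ : θ - θstar ∈ lam • USet Sg)
    (x₁ x₂ : Fin m → ℝ)
    (h1 : IsOptimal X f v lam θ Sg x₁)
    (h2 : IsOptimal X f v (2 * lam) θstar Sg x₂) :
    fStar f v θstar x₁ ≤ fStar f v θstar x₂ := by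
  obtain ⟨u₀, hu₀, hθeq⟩ := hθ
  have hθe : θ = θstar + lam • u₀ := by
    have : lam • u₀ = θ - θstar := hθeq
    rw [this]; abel
  -- x₁ is truly feasible
  have hx1true : ∀ k, 0 ≤ θstar ⬝ᵥ v k x₁ := by
    intro k
    have := h1.1.2 k (-u₀) (neg_mem_USet hu₀)
    have he : θ + lam • (-u₀) = θstar := by
      rw [hθe, smul_neg]; abel
    rwa [he] at this
  -- x₂ is truly feasible
  have hx2true : ∀ k, 0 ≤ θstar ⬝ᵥ v k x₂ := by
    intro k
    have := h2.1.2 k 0 (zero_mem_USet Sg)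
    simpa using this
  -- x₂ is feasible for the (lam, θ) problem
  have hx2feas : Feasible X v lam θ Sg x₂ := by
    refine ⟨h2.1.1, fun k u hu => ?_⟩
    have hw := half_add_mem_USet hSg hu₀ hu
    have := h2.1.2 k _ hw
    have he : θstar + (2 * lam) • ((2⁻¹ : ℝ) • (u₀ + u)) = θ + lam • u := by
      rw [hθe, smul_smul, smul_add]
      have : 2 * lam * 2⁻¹ = lam := by ring
      rw [this]; abel
    rwa [he] at this
  have hle : f x₁ ≤ f x₂ := h1.2 x₂ hx2feas
  rw [fStar, fStar, if_pos hx1true, if_pos hx2true]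
  exact_mod_cast hle
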